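/- Let N = 2n. The involution s_0 defined by s_0(i) = n + i and s_0(n+i) = i for 1 ≤ i ≤ n is the minimal element of I_N^s: every fixed-point-free involution s of S_N mapping {1,...,n} onto {n+1,...,2n} satisfies s_0 ≤_B s in the Bruhat order. -/

import Mathlib

/-- Number of inversions of a permutation of `Fin N`. -/
def inversions {N : ℕ} (s : Equiv.Perm (Fin N)) : ℕ :=
  (Finset.univ.filter (fun p : Fin N × Fin N => p.1 < p.2 ∧ s p.2 < s p.1)).card

/-- One step of the Bruhat relation: multiply by a transposition, not decreasing inversions. -/
def bruhatStep {N : ℕ} (σ τ : Equiv.Perm (Fin N)) : Prop :=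
  ∃ i j : Fin N, i ≠ j ∧ τ = σ * Equiv.swap i j ∧ inversions σ ≤ inversions τ

/-- The Bruhat order on the symmetric group: reflexive-transitive closure of `bruhatStep`. -/
def bruhatLE {N : ℕ} : Equiv.Perm (Fin N) → Equiv.Perm (Fin N) → Prop :=
  Relation.ReflTransGen bruhatStep

/-- Strict Bruhat order. -/
def bruhatLT {N : ℕ} (σ τ : Equiv.Perm (Fin N)) : Prop := bruhatLE σ τ ∧ σ ≠ τ

/-- Number of excedances of a permutation. -/
def exced {N : ℕ} (s : Equiv.Perm (Fin N)) : ℕ :=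
  (Finset.univ.filter (fun i : Fin N => i < s i)).card

/-- The involution length `l_I`. -/
def lI {N : ℕ} (s : Equiv.Perm (Fin N)) : ℕ := (inversions s + exced s) / 2

set_option linter.unnecessarySeqFocus false
set_option linter.unusedVariables false

lemma swap_val {N : ℕ} (i j x : Fin N) : ((Equiv.swap i j x : Fin N) : ℕ)
    = if (x:ℕ) = (i:ℕ) then (j:ℕ) else if (x:ℕ) = (j:ℕ) then (i:ℕ) else (x:ℕ) := by
  rw [Equiv.swap_apply_def]
  split_ifs with h1 h2 h3 h4 <;>
    first
      | rfl
      | (simp only [Fin.ext_iff] at * <;> omega)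

lemma swap_lt_of_adj {N : ℕ} {i j p q : Fin N} (hij : (i:ℕ)+1 = (j:ℕ))
    (hpq : p < q) (hne : ¬(p = i ∧ q = j)) :
    Equiv.swap i j p < Equiv.swap i j q := by
  have h1 := Fin.lt_def.mp hpq
  have hne' : ¬((p:ℕ) = (i:ℕ) ∧ (q:ℕ) = (j:ℕ)) := by
    rintro ⟨e1, e2⟩
    exact hne ⟨Fin.ext e1, Fin.ext e2⟩
  rw [Fin.lt_def, swap_val, swap_val]
  split_ifs <;> omega

lemma inversions_inv {N : ℕ} (w : Equiv.Perm (Fin N)) : inversions w⁻¹ = inversions w := by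
  unfold inversions
  apply Finset.card_bij' (fun p _ => (w⁻¹ p.2, w⁻¹ p.1)) (fun p _ => (w p.2, w p.1))
  · intro a ha
    simp only [Finset.mem_filter, Finset.mem_univ, true_and] at ha ⊢
    exact ⟨ha.2, by simpa using ha.1⟩
  · intro a ha
    simp only [Finset.mem_filter, Finset.mem_univ, true_and] at ha ⊢
    exact ⟨ha.2, by simpa using ha.1⟩
  · intro a ha; simp
  · intro a ha; simp

lemma inversions_mul_swap_adj {N : ℕ} (w : Equiv.Perm (Fin N)) {i j : Fin N}
    (hij : (i:ℕ)+1 = (j:ℕ)) (h : w j < w i) :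
    inversions (w * Equiv.swap i j) + 1 = inversions w := by
  classical
  have hij' : i < j := by rw [Fin.lt_def]; omega
  have hmem : (i,j) ∈ Finset.univ.filter
      (fun p : Fin N × Fin N => p.1 < p.2 ∧ w p.2 < w p.1) := by
    simp [hij', h]
  have key : (Finset.univ.filter
        (fun p : Fin N × Fin N => p.1 < p.2 ∧ (w * Equiv.swap i j) p.2 < (w * Equiv.swap i j) p.1)).card
      = ((Finset.univ.filter
        (fun p : Fin N × Fin N => p.1 < p.2 ∧ w p.2 < w p.1)).erase (i, j)).card := by
    apply Finset.card_bij' (fun p _ => (Equiv.swap i j p.1, Equiv.swap i j p.2))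
      (fun p _ => (Equiv.swap i j p.1, Equiv.swap i j p.2))
    · intro a ha
      simp only [Finset.mem_filter, Finset.mem_univ, true_and, Equiv.Perm.mul_apply] at ha
      obtain ⟨h1, h2⟩ : a.1 < a.2 ∧ w (Equiv.swap i j a.2) < w (Equiv.swap i j a.1) := by
        exact (Finset.mem_filter.mp ha).2
      have hne : ¬(a.1 = i ∧ a.2 = j) := by
        rintro ⟨rfl, rfl⟩
        rw [Equiv.swap_apply_right, Equiv.swap_apply_left] at h2
        exact absurd h2 (asymm h)
      rw [Finset.mem_erase]
      refine ⟨?_, ?_⟩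
      · intro hc
        have hc1 : Equiv.swap i j a.1 = i := congrArg Prod.fst hc
        have hc2 : Equiv.swap i j a.2 = j := congrArg Prod.snd hc
        have := Equiv.injective (Equiv.swap i j)
        have e1 : a.1 = j := by
          have := congrArg (Equiv.swap i j) hc1
          simpa [Equiv.swap_apply_self, Equiv.swap_apply_left] using this
        have e2 : a.2 = i := by
          have := congrArg (Equiv.swap i j) hc2
          simpa [Equiv.swap_apply_self, Equiv.swap_apply_right] using this
        rw [e1, e2] at h1
        exact absurd h1 (not_lt.2 (le_of_lt hij'))
      · simp only [Finset.mem_filter, Finset.mem_univ, true_and]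
        exact ⟨swap_lt_of_adj hij h1 hne, h2⟩
    · intro a ha
      rw [Finset.mem_erase] at ha
      obtain ⟨hane, ha⟩ := ha
      simp only [Finset.mem_filter, Finset.mem_univ, true_and] at ha ⊢
      obtain ⟨h1, h2⟩ := ha
      have hne : ¬(a.1 = i ∧ a.2 = j) := by
        rintro ⟨e1, e2⟩
        exact hane (Prod.ext e1 e2)
      refine ⟨swap_lt_of_adj hij h1 hne, ?_⟩
      simp only [Equiv.Perm.mul_apply, Equiv.swap_apply_self]
      exact h2
    · intro a ha; simp [Equiv.swap_apply_self]
    · intro a ha; simp [Equiv.swap_apply_self]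
  unfold inversions
  rw [key, Finset.card_erase_of_mem hmem]
  have hpos : 0 < (Finset.univ.filter
      (fun p : Fin N × Fin N => p.1 < p.2 ∧ w p.2 < w p.1)).card :=
    Finset.card_pos.2 ⟨(i,j), hmem⟩
  omega

-- fallback: if no adjacent descent, s = s0
lemma eq_s0_of_no_descent {n : ℕ} (s0 : Equiv.Perm (Fin (n + n)))
    (hs0 : ∀ i : Fin (n + n),
      ((i : ℕ) < n → (s0 i : ℕ) = (i : ℕ) + n) ∧ (n ≤ (i : ℕ) → (s0 i : ℕ) = (i : ℕ) - n))
    (s : Equiv.Perm (Fin (n + n))) (hinv : s * s = 1)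
    (hhalf : ∀ i : Fin (n + n), (i : ℕ) < n → n ≤ (s i : ℕ))
    (hd : ¬ ∃ a b : Fin (n+n), (a:ℕ)+1 = (b:ℕ) ∧ (b:ℕ) < n ∧ s b < s a) :
    s = s0 := by
  push_neg at hd
  have Hlt : ∀ a b : Fin (n+n), (a:ℕ)+1 = (b:ℕ) → (b:ℕ) < n → (s a:ℕ) < (s b:ℕ) := by
    intro a b h1 h2
    have h3 := hd a b h1 h2
    have h4 : (s a : ℕ) ≤ (s b : ℕ) := Fin.le_def.mp h3
    have h5 : s a ≠ s b := by
      intro hc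
      have : a = b := s.injective hc
      apply_fun (Fin.val) at this
      omega
    have h6 : (s a : ℕ) ≠ (s b : ℕ) := fun hc => h5 (Fin.ext hc)
    omega
  have chain : ∀ (d : ℕ) (i j : Fin (n+n)), (i:ℕ) + d = (j:ℕ) → (j:ℕ) < n →
      (s i:ℕ) + d ≤ (s j:ℕ) := by
    intro d
    induction d with
    | zero =>
      intro i j hij _
      have : i = j := Fin.ext (by omega)
      subst this; omega
    | succ d ih =>
      intro i j hij hj
      have hk : (i:ℕ) + d < n + n := by omega
      have h1 : (s i:ℕ) + d ≤ (s ⟨(i:ℕ)+d, hk⟩ :ℕ) := ih i ⟨(i:ℕ)+d, hk⟩ rfl (by simp; omega)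
      have h2 : (s ⟨(i:ℕ)+d, hk⟩ : ℕ) < (s j : ℕ) := Hlt _ j (by simp; omega) hj
      omega
  have hval : ∀ i : Fin (n+n), (i:ℕ) < n → (s i:ℕ) = n + (i:ℕ) := by
    intro i hi
    have hn : 0 < n := by omega
    have hz : (0:ℕ) < n + n := by omega
    have lb : (s ⟨0, hz⟩ : ℕ) + (i:ℕ) ≤ (s i : ℕ) := chain (i:ℕ) ⟨0, hz⟩ i (by simp) hi
    have lb2 : n ≤ (s ⟨0, hz⟩ : ℕ) := hhalf _ (by simp; omega)
    have hw : n - 1 < n + n := by omega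
    have ub : (s i:ℕ) + (n-1-(i:ℕ)) ≤ (s ⟨n-1, hw⟩ : ℕ) := chain (n-1-(i:ℕ)) i ⟨n-1, hw⟩ (by simp; omega) (by simp; omega)
    have hub2 : (s ⟨n-1, hw⟩ : ℕ) < n + n := (s ⟨n-1, hw⟩).isLt
    omega
  apply Equiv.ext
  intro i
  apply Fin.ext
  by_cases hi : (i:ℕ) < n
  · rw [hval i hi, (hs0 i).1 hi]; omega
  · have hni : n ≤ (i:ℕ) := le_of_not_gt hi
    have hilt := i.isLt
    have hjlt : (i:ℕ) - n < n + n := by omega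
    set j : Fin (n+n) := ⟨(i:ℕ) - n, hjlt⟩ with hjdef
    have hj : (j:ℕ) < n := by simp [hjdef]; omega
    have hsj : s j = i := by
      apply Fin.ext
      rw [hval j hj]; simp [hjdef]; omega
    have hss : s (s j) = j := by
      have := congrArg (fun f : Equiv.Perm (Fin (n+n)) => f j) hinv
      simpa using this
    rw [hsj] at hss
    rw [hss, (hs0 i).2 hni]

theorem aux_min {n : ℕ} (s0 : Equiv.Perm (Fin (n + n)))
    (hs0 : ∀ i : Fin (n + n),
      ((i : ℕ) < n → (s0 i : ℕ) = (i : ℕ) + n) ∧ (n ≤ (i : ℕ) → (s0 i : ℕ) = (i : ℕ) - n)) :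
    ∀ k (s : Equiv.Perm (Fin (n + n))), inversions s = k → s * s = 1 →
      (∀ i : Fin (n + n), (i : ℕ) < n → n ≤ (s i : ℕ)) → bruhatLE s0 s := by
  intro k
  induction k using Nat.strong_induction_on with
  | _ k ih =>
    intro s hk hinv hhalf
    by_cases hd : ∃ a b : Fin (n+n), (a:ℕ)+1 = (b:ℕ) ∧ (b:ℕ) < n ∧ s b < s a
    · obtain ⟨a, b, hab, hbn, hdesc⟩ := hd
      have hsinv : s⁻¹ = s := inv_eq_of_mul_eq_one_left hinv
      have ha_n : (a:ℕ) < n := by omega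
      have hsa : n ≤ (s a : ℕ) := hhalf a ha_n
      have hsb : n ≤ (s b : ℕ) := hhalf b hbn
      set t : Equiv.Perm (Fin (n+n)) := Equiv.swap a b with htdef
      have ht : t * t = 1 := Equiv.swap_mul_self a b
      set m : Equiv.Perm (Fin (n+n)) := t * s with hmdef
      set s' : Equiv.Perm (Fin (n+n)) := t * s * t with hs'def
      -- values of m at a, b
      have hm_a : m a = s a := by
        show t (s a) = s a
        apply Equiv.swap_apply_of_ne_of_ne <;>
          · intro hc; apply_fun Fin.val at hc; omega
      have hm_b : m b = s b := by
        show t (s b) = s b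
        apply Equiv.swap_apply_of_ne_of_ne <;>
          · intro hc; apply_fun Fin.val at hc; omega
      -- inversion counts
      have e1 : inversions (s * t) + 1 = inversions s := inversions_mul_swap_adj s hab hdesc
      have e2 : inversions m = inversions (s * t) := by
        have hminv : m⁻¹ = s * t := by
          rw [hmdef, mul_inv_rev, hsinv, Equiv.swap_inv]
        rw [← inversions_inv m, hminv]
      have e3 : inversions s' + 1 = inversions m := by
        have hmm : s' = m * t := by rw [hs'def, hmdef]
        rw [hmm]
        exact inversions_mul_swap_adj m hab (by rw [hm_a, hm_b]; exact hdesc)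
      -- s' is an involution mapping first half to second half
      have hinv' : s' * s' = 1 := by
        have : s' * s' = t * s * (t * t) * s * t := by rw [hs'def]; group
        rw [this, ht, mul_one, mul_assoc t s, hinv, mul_one, ht]
      have hhalf' : ∀ i : Fin (n+n), (i:ℕ) < n → n ≤ (s' i : ℕ) := by
        intro i hi
        have hti : (t i : ℕ) < n := by
          rw [htdef, swap_val]; split_ifs <;> omega
        have h1 : n ≤ (s (t i) : ℕ) := hhalf _ hti
        have h2 : t (s (t i)) = s (t i) := by
          apply Equiv.swap_apply_of_ne_of_ne <;>
            · intro hc; apply_fun Fin.val at hc; omega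
        show n ≤ ((t * s * t) i : ℕ)
        simp only [Equiv.Perm.mul_apply]
        rw [h2]; exact h1
      have hlt : inversions s' < k := by omega
      have ih' := ih (inversions s') hlt s' rfl hinv' hhalf'
      -- two Bruhat steps : s' → m → s
      have step1 : bruhatStep s' m := by
        refine ⟨a, b, ?_, ?_, by omega⟩
        · intro hc; apply_fun Fin.val at hc; omega
        · rw [hs'def, hmdef, ← htdef, mul_assoc, ht, mul_one]
      have step2 : bruhatStep m s := by
        refine ⟨s a, s b, ?_, ?_, by omega⟩
        · intro hc
          have : a = b := s.injective hc
          apply_fun Fin.val at this; omega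
        · have hu : Equiv.swap (s a) (s b) = s * t * s := by
            rw [Equiv.swap_apply_apply s a b, hsinv, htdef]
          rw [hu, hmdef]
          have : t * s * (s * t * s) = t * (s * s) * (t * s) := by group
          rw [this, hinv, mul_one, ← mul_assoc, ht, one_mul]
      exact (ih'.tail step1).tail step2
    · have := eq_s0_of_no_descent s0 hs0 s hinv hhalf hd
      rw [this]
      exact Relation.ReflTransGen.refl

/-- The involution i ↦ n+i is the minimal element (for the Bruhat order) among
fixed-point-free involutions of S_{2n} mapping the first half onto the second half. -/
theorem s0_bruhat_minimal {n : ℕ} (s0 : Equiv.Perm (Fin (n + n)))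
    (hs0 : ∀ i : Fin (n + n),
      ((i : ℕ) < n → (s0 i : ℕ) = (i : ℕ) + n) ∧ (n ≤ (i : ℕ) → (s0 i : ℕ) = (i : ℕ) - n))
    (s : Equiv.Perm (Fin (n + n))) (hinv : s * s = 1) (hfree : ∀ i, s i ≠ i)
    (hhalf : ∀ i : Fin (n + n), (i : ℕ) < n → n ≤ (s i : ℕ)) :
    bruhatLE s0 s :=
  aux_min s0 hs0 (inversions s) s rfl hinv hhalf
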